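/- For every real number a and every m ≥ 1, the m×m Jordan block J_m(ia) with eigenvalue ia (i.e., the matrix with ia on the diagonal, 1 on the superdiagonal, and 0 elsewhere) is G-Hamiltonian: there exists a non-singular Hermitian matrix G ∈ ℂ^{m×m} such that J_m(ia)*G + G·J_m(ia) = 0. -/

import Mathlib

open Matrix

/-- The `m × m` Jordan block with eigenvalue `lam`. -/
def jordanBlock (m : ℕ) (lam : ℂ) : Matrix (Fin m) (Fin m) ℂ :=
  Matrix.of fun p q => if (q : ℕ) = (p : ℕ) then lam
    else if (q : ℕ) = (p : ℕ) + 1 then 1 else 0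

private lemma star_pow_aux (n k j : ℕ) (h : k + j = n) :
    star (Complex.I ^ n * (-1 : ℂ) ^ j) = Complex.I ^ n * (-1) ^ k := by
  rw [star_mul', star_pow, star_pow, Complex.star_def, Complex.conj_I]
  have h1 : (starRingEnd ℂ) (-1 : ℂ) = -1 := by simp
  rw [h1, neg_pow Complex.I n]
  have h2 : ((-1 : ℂ)) ^ n * Complex.I ^ n * (-1) ^ j
      = Complex.I ^ n * (-1) ^ (n + j) := by rw [pow_add]; ring
  rw [h2, show n + j = k + 2 * j by omega, pow_add, pow_mul]
  norm_num

/-- For every real `a` and every `m ≥ 1`, the Jordan block `J_m(ia)` is G-Hamiltonian: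
there is a non-singular Hermitian `G` with `J_m(ia)* G + G J_m(ia) = 0`. -/
theorem jordanBlock_imaginary_gHamiltonian (m : ℕ) (hm : 1 ≤ m) (a : ℝ) :
    ∃ G : Matrix (Fin m) (Fin m) ℂ, G.IsHermitian ∧ IsUnit G ∧
      (jordanBlock m ((a : ℂ) * Complex.I))ᴴ * G
        + G * jordanBlock m ((a : ℂ) * Complex.I) = 0 := by
  classical
  set lam : ℂ := (a : ℂ) * Complex.I with hlam
  set J : Matrix (Fin m) (Fin m) ℂ := jordanBlock m lam with hJ
  set c : Fin m → ℂ := fun p => Complex.I ^ (m - 1) * (-1) ^ (p : ℕ) with hc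
  set r' : Fin m → Fin m := fun p => ⟨m - 1 - (p : ℕ), by have := p.isLt; omega⟩ with hr'
  set G : Matrix (Fin m) (Fin m) ℂ :=
    Matrix.of (fun p q => if (p : ℕ) + (q : ℕ) = m - 1 then c p else 0) with hG
  have hGapp : ∀ p q : Fin m, G p q = if (p : ℕ) + (q : ℕ) = m - 1 then c p else 0 :=
    fun p q => rfl
  have hJapp : ∀ p q : Fin m, J p q = if (q : ℕ) = (p : ℕ) then lam
      else if (q : ℕ) = (p : ℕ) + 1 then 1 else 0 := fun p q => rfl
  have hr'val : ∀ p : Fin m, ((r' p : Fin m) : ℕ) = m - 1 - (p : ℕ) := fun p => rfl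
  -- key pow identity
  have hcc : ∀ p q : Fin m, (p : ℕ) + (q : ℕ) = m - 1 → c p * c q = 1 := by
    intro p q h
    have h2 : (p : ℕ) + (q : ℕ) = m - 1 := h
    rw [hc]
    simp only
    rw [mul_mul_mul_comm, ← mul_pow, Complex.I_mul_I, ← pow_add, h2]
    rw [← pow_add]
    exact Even.neg_one_pow (by exact ⟨m - 1, by ring⟩)
  have hceq : ∀ p q : Fin m, (p : ℕ) = (q : ℕ) → c p = c q := by
    intro p q h; rw [hc]; simp only [h]
  -- sums
  have hmulG : ∀ (A : Matrix (Fin m) (Fin m) ℂ) (p q : Fin m),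
      (A * G) p q = A p (r' q) * c (r' q) := by
    intro A p q
    rw [mul_apply]
    rw [Finset.sum_eq_single (r' q)]
    · rw [hGapp]
      rw [if_pos (by rw [hr'val]; have := q.isLt; omega)]
    · intro b _ hb
      rw [hGapp, if_neg, mul_zero]
      intro hcon
      apply hb
      apply Fin.ext
      rw [hr'val]
      have := q.isLt; have := b.isLt; omega
    · intro h; exact absurd (Finset.mem_univ _) h
  have hGmul : ∀ (A : Matrix (Fin m) (Fin m) ℂ) (p q : Fin m),
      (G * A) p q = c p * A (r' p) q := by
    intro A p q
    rw [mul_apply]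
    rw [Finset.sum_eq_single (r' p)]
    · rw [hGapp, if_pos (by rw [hr'val]; have := p.isLt; omega)]
    · intro b _ hb
      rw [hGapp, if_neg, zero_mul]
      intro hcon
      apply hb
      apply Fin.ext
      rw [hr'val]
      have := p.isLt; have := b.isLt; omega
    · intro h; exact absurd (Finset.mem_univ _) h
  refine ⟨G, ?_, ?_, ?_⟩
  · -- Hermitian
    ext p q
    rw [conjTranspose_apply, hGapp, hGapp]
    by_cases h : (p : ℕ) + (q : ℕ) = m - 1
    · rw [if_pos (by omega), if_pos h]
      rw [hc]
      exact star_pow_aux (m - 1) (p : ℕ) (q : ℕ) h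
    · rw [if_neg (by omega), if_neg h, star_zero]
  · -- IsUnit
    have hGG : G * G = 1 := ?_
    · exact ⟨⟨G, G, hGG, hGG⟩, rfl⟩
    ext p q
    rw [hmulG, hGapp]
    by_cases h : (p : ℕ) = (q : ℕ)
    · rw [if_pos (by rw [hr'val]; have := q.isLt; omega)]
      rw [one_apply, if_pos (Fin.ext h)]
      apply hcc
      rw [hr'val]
      have := q.isLt; omega
    · rw [if_neg (by rw [hr'val]; have := q.isLt; omega), zero_mul,
        one_apply, if_neg (fun hc => h (congrArg Fin.val hc))]
  · -- the Hamiltonian equation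
    ext p q
    rw [Matrix.add_apply, Matrix.zero_apply]
    have h1 : (Jᴴ * G) p q = star (J (r' q) p) * c (r' q) := by
      rw [hmulG, conjTranspose_apply]
    rw [h1, hGmul, hJapp, hJapp, hr'val, hr'val]
    have hp := p.isLt
    have hq := q.isLt
    by_cases h1 : (p : ℕ) + (q : ℕ) = m - 1
    · rw [if_pos (by omega), if_pos (by omega)]
      have hcr : c (r' q) = c p := hceq _ _ (by rw [hr'val]; omega)
      have hsl : star lam = -lam := by
        rw [hlam, star_mul']
        simp only [Complex.star_def, Complex.conj_I, Complex.conj_ofReal]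
        ring
      rw [hcr, hsl]
      ring
    · by_cases h2 : (p : ℕ) + (q : ℕ) = m
      · rw [if_neg (by omega), if_pos (by omega),
          if_neg (by omega), if_pos (by omega), star_one, one_mul, mul_one]
        obtain ⟨k, hk⟩ : ∃ k, (p : ℕ) = k + 1 := ⟨(p : ℕ) - 1, by omega⟩
        rw [hc]
        simp only [hr'val]
        rw [show m - 1 - (q : ℕ) = k by omega, hk, pow_succ]
        ring
      · rw [if_neg (by omega), if_neg (by omega),
          if_neg (by omega), if_neg (by omega), star_zero, zero_mul, mul_zero, add_zero]
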